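/- arXiv:2302.06835 — 3 statements merged into one kernel-verified Lean document; each statement's English description precedes it below -/
import Mathlib

section
/- Let G be a finite simple connected graph on n vertices with Laplacian L, and let u ≠ v be vertices with {u,v} not an edge of G. Let G' = G ∪ {u,v} be the graph obtained by adding the edge {u,v}, whose Laplacian is L' = L + (1_u − 1_v)(1_u − 1_v)ᵀ. Then R_tot(G) − R_tot(G') = n · B²_{u,v} / (1 + R_{u,v}), where R_{u,v}, B²_{u,v}, and R_tot(G) are computed from L and R_tot(G') is computed from L'. -/
open Matrix Finset

/-- The effective resistance `R_{u,v} = (1_u − 1_v)ᵀ (L + (1/n)J)⁻¹ (1_u − 1_v)` computed from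
a Laplacian matrix `L` (here `J = 11ᵀ` is the all-ones matrix and `n` the number of vertices). -/
noncomputable def resOf {V : Type*} [Fintype V] [DecidableEq V] (L : Matrix V V ℝ) (u v : V) :
    ℝ :=
  (Pi.single u 1 - Pi.single v 1) ⬝ᵥ
    ((L + ((Fintype.card V : ℝ))⁻¹ • Matrix.of (fun _ _ : V => (1 : ℝ)))⁻¹ *ᵥ
      (Pi.single u 1 - Pi.single v 1))

/-- The squared biharmonic distance `B²_{u,v} = (1_u − 1_v)ᵀ (L + (1/n)J)⁻² (1_u − 1_v)`
computed from a Laplacian matrix `L`. -/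
noncomputable def bihSqOf {V : Type*} [Fintype V] [DecidableEq V] (L : Matrix V V ℝ) (u v : V) :
    ℝ :=
  (Pi.single u 1 - Pi.single v 1) ⬝ᵥ
    (((L + ((Fintype.card V : ℝ))⁻¹ • Matrix.of (fun _ _ : V => (1 : ℝ)))⁻¹ *
        (L + ((Fintype.card V : ℝ))⁻¹ • Matrix.of (fun _ _ : V => (1 : ℝ)))⁻¹) *ᵥ
      (Pi.single u 1 - Pi.single v 1))

/-- The total resistance computed from a Laplacian matrix `L`: the sum of `R_{u,v}` over
unordered pairs of distinct vertices, i.e. half the sum over ordered pairs. -/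
noncomputable def totResOf {V : Type*} [Fintype V] [DecidableEq V] (L : Matrix V V ℝ) : ℝ :=
  (∑ p ∈ Finset.univ.offDiag, resOf L p.1 p.2) / 2

set_option linter.unusedSectionVars false

section Helpers
variable {V : Type*} [Fintype V] [DecidableEq V]

lemma aux_mul_vecMulVec (A : Matrix V V ℝ) (a b : V → ℝ) :
    A * Matrix.vecMulVec a b = Matrix.vecMulVec (A *ᵥ a) b := by
  ext i j
  simp [Matrix.mul_apply, Matrix.vecMulVec_apply, Matrix.mulVec, dotProduct,
    Finset.sum_mul, mul_assoc]

lemma aux_vecMulVec_mul (a b : V → ℝ) (A : Matrix V V ℝ) :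
    Matrix.vecMulVec a b * A = Matrix.vecMulVec a (b ᵥ* A) := by
  ext i j
  simp [Matrix.mul_apply, Matrix.vecMulVec_apply, Matrix.vecMul, dotProduct,
    Finset.mul_sum, mul_assoc]

lemma aux_vecMulVec_mulVec (a b x : V → ℝ) :
    Matrix.vecMulVec a b *ᵥ x = (b ⬝ᵥ x) • a := by
  ext i
  simp [Matrix.mulVec, Matrix.vecMulVec_apply, dotProduct, Finset.mul_sum,
    mul_comm, mul_left_comm]

lemma aux_vecMulVec_mul_vecMulVec (a b c d : V → ℝ) :
    Matrix.vecMulVec a b * Matrix.vecMulVec c d = (b ⬝ᵥ c) • Matrix.vecMulVec a d := by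
  ext i j
  simp only [Matrix.mul_apply, Matrix.vecMulVec_apply, dotProduct, Matrix.smul_apply,
    smul_eq_mul, Finset.sum_mul]
  rw [← Finset.sum_mul, Finset.sum_mul]
  exact Finset.sum_congr rfl fun k _ => by ring

end Helpers

/-- if `G` is a finite simple connected graph with Laplacian `L`, `u ≠ v` are
vertices with `{u,v}` not an edge of `G`, and `L' = L + (1_u − 1_v)(1_u − 1_v)ᵀ` is the
Laplacian of the graph `G ∪ {u,v}`, then
`R_tot(G) − R_tot(G ∪ {u,v}) = n · B²_{u,v} / (1 + R_{u,v})`. -/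
theorem change_in_total_resistance {V : Type*} [Fintype V] [DecidableEq V]
    (G : SimpleGraph V) [DecidableRel G.Adj]
    (hconn : G.Connected) (hcard : 2 ≤ Fintype.card V)
    (u v : V) (huv : u ≠ v) (hne : ¬ G.Adj u v) :
    totResOf (G.lapMatrix ℝ) -
        totResOf (G.lapMatrix ℝ +
          Matrix.vecMulVec (Pi.single u 1 - Pi.single v 1) (Pi.single u 1 - Pi.single v 1)) =
      (Fintype.card V : ℝ) * bihSqOf (G.lapMatrix ℝ) u v / (1 + resOf (G.lapMatrix ℝ) u v) := by
  classical
  have hn0 : (0:ℝ) < (Fintype.card V : ℝ) := by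
    have : 0 < Fintype.card V := by omega
    exact_mod_cast this
  set L : Matrix V V ℝ := G.lapMatrix ℝ with hL
  set Jm : Matrix V V ℝ := Matrix.of (fun _ _ : V => (1 : ℝ)) with hJm
  set M : Matrix V V ℝ := L + ((Fintype.card V : ℝ))⁻¹ • Jm with hMdef
  set w : V → ℝ := Pi.single u 1 - Pi.single v 1 with hwdef
  set W : Matrix V V ℝ := Matrix.vecMulVec w w with hWdef
  -- M is symmetric
  have hMsymm : Mᵀ = M := by
    rw [hMdef, Matrix.transpose_add, Matrix.transpose_smul]
    congr 1
    exact G.isSymm_lapMatrix (R := ℝ)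
  have hMherm : M.IsHermitian := by
    rw [Matrix.IsHermitian, Matrix.conjTranspose_eq_transpose_of_trivial, hMsymm]
  -- the quadratic form of M
  have hquad : ∀ x : V → ℝ, x ⬝ᵥ (M *ᵥ x) =
      x ⬝ᵥ (L *ᵥ x) + ((Fintype.card V : ℝ))⁻¹ * (∑ i, x i)^2 := by
    intro x
    have hJv : Jm *ᵥ x = fun _ => ∑ j, x j := by
      ext i; simp [hJm, Matrix.mulVec, dotProduct]
    have hJq : x ⬝ᵥ (Jm *ᵥ x) = (∑ i, x i)^2 := by
      rw [hJv]
      simp [dotProduct, sq, ← Finset.sum_mul]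
    rw [hMdef, Matrix.add_mulVec, dotProduct_add, Matrix.smul_mulVec, dotProduct_smul,
      smul_eq_mul, hJq]
  -- M is positive definite
  have hMpd : M.PosDef := by
    refine Matrix.PosDef.of_dotProduct_mulVec_pos hMherm fun x hx => ?_
    rw [star_trivial, hquad]
    have h1 : 0 ≤ x ⬝ᵥ (L *ᵥ x) := by
      have := (G.posSemidef_lapMatrix ℝ).dotProduct_mulVec_nonneg x
      rwa [star_trivial] at this
    have h2 : 0 ≤ ((Fintype.card V : ℝ))⁻¹ * (∑ i, x i)^2 := by positivity
    rcases lt_or_eq_of_le h1 with h | h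
    · linarith
    rcases lt_or_eq_of_le h2 with h' | h'
    · linarith
    exfalso
    have hforall : ∀ i j : V, G.Reachable i j → x i = x j := by
      rw [← SimpleGraph.lapMatrix_toLinearMap₂'_apply'_eq_zero_iff_forall_reachable]
      rw [Matrix.toLinearMap₂'_apply', ← h]
    have hconst : ∀ i j : V, x i = x j := fun i j => hforall i j (hconn.preconnected i j)
    have hsum0 : (∑ i, x i) = 0 := by
      by_contra hzz
      have : ((Fintype.card V : ℝ))⁻¹ * (∑ i, x i)^2 > 0 := by positivity
      linarith
    have : x = 0 := by
      funext i
      have hs : (∑ j, x j) = (Fintype.card V : ℝ) * x i := by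
        rw [Finset.sum_congr rfl fun j _ => hconst j i]
        simp [Finset.card_univ, mul_comm]
      rw [hsum0] at hs
      rcases mul_eq_zero.1 hs.symm with h | h
      · exact absurd h hn0.ne'
      · exact h
    exact hx this
  have hMunit : IsUnit M.det := (Matrix.isUnit_iff_isUnit_det M).1 hMpd.isUnit
  have hMM : M * M⁻¹ = 1 := Matrix.mul_nonsing_inv M hMunit
  have hMM' : M⁻¹ * M = 1 := Matrix.nonsing_inv_mul M hMunit
  have hMinvsymm : M⁻¹ᵀ = M⁻¹ := by rw [Matrix.transpose_nonsing_inv, hMsymm]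
  set x : V → ℝ := M⁻¹ *ᵥ w with hxdef
  set α : ℝ := w ⬝ᵥ x with hαdef
  have hw0 : w ≠ 0 := by
    intro h
    have : w u = 0 := by rw [h]; rfl
    rw [hwdef] at this
    simp [Pi.single_apply, huv, (Ne.symm huv)] at this
  have hα : 0 < α := by
    have := hMpd.inv.dotProduct_mulVec_pos hw0
    rwa [star_trivial, ← hxdef, ← hαdef] at this
  have h1α : (0:ℝ) < 1 + α := by linarith
  have h1α' : (1:ℝ) + α ≠ 0 := h1α.ne'
  have hMx : M *ᵥ x = w := by
    rw [hxdef, Matrix.mulVec_mulVec, hMM, Matrix.one_mulVec]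
  set N : Matrix V V ℝ := M⁻¹ - (1 + α)⁻¹ • Matrix.vecMulVec x x with hNdef
  have hwM : w ᵥ* M⁻¹ = x := by
    rw [← Matrix.mulVec_transpose, hMinvsymm, hxdef]
  have hcoef : (1:ℝ) - (1+α)⁻¹ * α = (1+α)⁻¹ := by field_simp; ring
  have hMN : M * N = 1 - (1 + α)⁻¹ • Matrix.vecMulVec w x := by
    rw [hNdef, Matrix.mul_sub, hMM, Matrix.mul_smul, aux_mul_vecMulVec, hMx]
  have hWN : W * N = (1 + α)⁻¹ • Matrix.vecMulVec w x := by
    rw [hNdef, Matrix.mul_sub, hWdef, aux_vecMulVec_mul, hwM, Matrix.mul_smul,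
      aux_vecMulVec_mul_vecMulVec, ← hαdef, smul_smul]
    calc Matrix.vecMulVec w x - ((1+α)⁻¹ * α) • Matrix.vecMulVec w x
        = ((1:ℝ) - (1+α)⁻¹ * α) • Matrix.vecMulVec w x := by rw [sub_smul, one_smul]
      _ = (1+α)⁻¹ • Matrix.vecMulVec w x := by rw [hcoef]
  have key : (M + W) * N = 1 := by
    rw [Matrix.add_mul, hMN, hWN, sub_add_cancel]
  have hNinv : (M + W)⁻¹ = N := Matrix.inv_eq_right_inv key
  -- dot products with basis differences
  have hxe : ∀ p q : V, x ⬝ᵥ (Pi.single p 1 - Pi.single q 1) = x p - x q := by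
    intro p q
    rw [dotProduct_sub, dotProduct_single, dotProduct_single, mul_one, mul_one]
  have hex : ∀ p q : V, (Pi.single p 1 - Pi.single q 1) ⬝ᵥ x = x p - x q := by
    intro p q
    rw [dotProduct_comm]; exact hxe p q
  -- pointwise resistance change
  have hres' : ∀ p q : V, resOf (L + W) p q = resOf L p q - (1+α)⁻¹ * (x p - x q)^2 := by
    intro p q
    have harr : L + W + ((Fintype.card V : ℝ))⁻¹ • Jm = M + W := by
      rw [hMdef]; abel
    have h0 : resOf (L + W) p q = (Pi.single p 1 - Pi.single q 1) ⬝ᵥ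
        ((L + W + ((Fintype.card V : ℝ))⁻¹ • Jm)⁻¹ *ᵥ (Pi.single p 1 - Pi.single q 1)) := rfl
    have h1 : resOf L p q = (Pi.single p 1 - Pi.single q 1) ⬝ᵥ
        (M⁻¹ *ᵥ (Pi.single p 1 - Pi.single q 1)) := rfl
    rw [h0, harr, hNinv, hNdef, Matrix.sub_mulVec, dotProduct_sub,
      Matrix.smul_mulVec, dotProduct_smul, aux_vecMulVec_mulVec, dotProduct_smul,
      hxe, hex, ← h1]
    simp only [smul_eq_mul]
    ring
  -- sum of x is zero
  have ho : M *ᵥ (fun _ => (1:ℝ)) = fun _ => (1:ℝ) := by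
    rw [hMdef, Matrix.add_mulVec, hL, G.lapMatrix_mulVec_const_eq_zero, Matrix.smul_mulVec]
    ext i
    simp [hJm, Matrix.mulVec, dotProduct, Finset.card_univ]
    field_simp
  have hMinvone : M⁻¹ *ᵥ (fun _ => (1:ℝ)) = fun _ => (1:ℝ) := by
    conv_lhs => rw [← ho]
    rw [Matrix.mulVec_mulVec, hMM', Matrix.one_mulVec]
  have hs0 : ∑ i, x i = 0 := by
    have h1 : (fun _ => (1:ℝ)) ⬝ᵥ x = ∑ i, x i := by simp [dotProduct]
    rw [← h1, hxdef, Matrix.dotProduct_mulVec]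
    have h2 : (fun _ => (1:ℝ)) ᵥ* M⁻¹ = fun _ => (1:ℝ) := by
      rw [← Matrix.mulVec_transpose, hMinvsymm, hMinvone]
    rw [h2, hwdef]
    rw [dotProduct_sub, dotProduct_single, dotProduct_single]
    ring
  -- x ⬝ᵥ x is the biharmonic distance
  have hxx : x ⬝ᵥ x = bihSqOf L u v := by
    have h1 : bihSqOf L u v = w ⬝ᵥ ((M⁻¹ * M⁻¹) *ᵥ w) := rfl
    rw [h1]
    calc x ⬝ᵥ x = x ⬝ᵥ (M⁻¹ *ᵥ w) := by rw [← hxdef]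
      _ = (x ᵥ* M⁻¹) ⬝ᵥ w := Matrix.dotProduct_mulVec _ _ _
      _ = (M⁻¹ᵀ *ᵥ x) ⬝ᵥ w := by rw [Matrix.mulVec_transpose]
      _ = ((M⁻¹ * M⁻¹) *ᵥ w) ⬝ᵥ w := by rw [hMinvsymm, hxdef, Matrix.mulVec_mulVec]
      _ = w ⬝ᵥ ((M⁻¹ * M⁻¹) *ᵥ w) := dotProduct_comm _ _
  have hαres : resOf L u v = α := rfl
  -- summation
  have hsplit : totResOf L - totResOf (L + W) =
      (∑ p ∈ Finset.univ.offDiag, (1+α)⁻¹ * (x p.1 - x p.2)^2) / 2 := by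
    rw [totResOf, totResOf, div_sub_div_same, ← Finset.sum_sub_distrib]
    congr 1
    exact Finset.sum_congr rfl fun p _ => by rw [hres' p.1 p.2]; ring
  have hext : ∑ p ∈ Finset.univ.offDiag, (1+α)⁻¹ * (x p.1 - x p.2)^2
      = ∑ p ∈ Finset.univ ×ˢ Finset.univ, (1+α)⁻¹ * (x p.1 - x p.2)^2 := by
    apply Finset.sum_subset
    · intro p hp
      simp only [Finset.mem_offDiag] at hp
      simp [Finset.mem_product]
    · intro p hp hnp
      have hpq : p.1 = p.2 := by
        by_contra hc
        exact hnp (Finset.mem_offDiag.2 ⟨Finset.mem_univ _, Finset.mem_univ _, hc⟩)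
      rw [hpq]; simp
  have hprod : ∑ p ∈ Finset.univ ×ˢ Finset.univ, (1+α)⁻¹ * (x p.1 - x p.2)^2
      = (1+α)⁻¹ * (2 * (Fintype.card V : ℝ) * (x ⬝ᵥ x)) := by
    rw [← Finset.mul_sum]
    congr 1
    rw [Finset.sum_product]
    have hexp : ∀ i j : V, (x i - x j)^2 = x i^2 + x j^2 - 2*(x i * x j) := fun i j => by ring
    simp_rw [hexp]
    have hinner : ∀ i : V, ∑ j, (x i^2 + x j^2 - 2*(x i * x j))
        = (Fintype.card V : ℝ) * x i^2 + (∑ j, x j^2) := by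
      intro i
      have h2 : ∑ j, 2 * (x i * x j) = 2 * x i * (∑ j, x j) := by
        rw [Finset.mul_sum]
        exact Finset.sum_congr rfl fun j _ => by ring
      rw [Finset.sum_sub_distrib, Finset.sum_add_distrib, Finset.sum_const, h2, hs0]
      simp [Finset.card_univ, nsmul_eq_mul]
    simp_rw [hinner]
    rw [Finset.sum_add_distrib, Finset.sum_const, ← Finset.mul_sum, Finset.card_univ,
      nsmul_eq_mul]
    have hdx : x ⬝ᵥ x = ∑ i, x i^2 := by simp [dotProduct, sq]
    rw [hdx]; ring
  rw [hsplit, hext, hprod, ← hxx, hαres]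
  field_simp
end

section
/- Let G be a finite simple connected non-bipartite graph and let u, v be vertices. Then the series Σ_{i=0}^{∞} ( (1/d_u)(Â^i)_{uu} + (1/d_v)(Â^i)_{vv} − (2/√(d_u d_v))(Â^i)_{uv} ) converges and equals the effective resistance R_{u,v}. -/
open Matrix Finset

namespace EffResAux

variable {V : Type*} [Fintype V] [DecidableEq V] (G : SimpleGraph V) [DecidableRel G.Adj]

theorem signless_quad (x : V → ℝ) :
    x ⬝ᵥ ((G.degMatrix ℝ + G.adjMatrix ℝ) *ᵥ x) =
      (∑ i : V, ∑ j : V, if G.Adj i j then (x i + x j)^2 else 0) / 2 := by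
  simp_rw [add_mulVec, dotProduct_add, SimpleGraph.dotProduct_mulVec_degMatrix,
    SimpleGraph.dotProduct_mulVec_adjMatrix, ← sum_add_distrib,
    SimpleGraph.degree_eq_sum_if_adj, sum_mul, ite_mul, one_mul,
    zero_mul, ← sum_add_distrib, ite_add_ite, add_zero]
  rw [← add_self_div_two (∑ x_1 : V, ∑ x_2 : V, _)]
  conv_lhs => enter [1,2,2,i,2,j]; rw [if_congr (SimpleGraph.adj_comm G i j) rfl rfl]
  conv_lhs => enter [1,2]; rw [Finset.sum_comm]
  simp_rw [← sum_add_distrib, ite_add_ite]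
  congr 2 with i
  congr 2 with j
  ring_nf

theorem signless_quad_eq_zero_iff (x : V → ℝ) :
    x ⬝ᵥ ((G.degMatrix ℝ + G.adjMatrix ℝ) *ᵥ x) = 0 ↔
      ∀ i j, G.Adj i j → x i = - x j := by
  rw [signless_quad]
  rw [div_eq_zero_iff]
  simp (disch := intros; positivity) only [sum_eq_zero_iff_of_nonneg, mem_univ, ite_eq_right_iff,
    OfNat.ofNat_ne_zero, or_false, true_implies]
  constructor
  · intro h i j hadj
    have := h i j hadj
    have := pow_eq_zero_iff (n := 2) (by norm_num) |>.1 this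
    linarith
  · intro h i j
    intro hadj
    rw [h i j hadj]
    ring

theorem posSemidef_signless : (G.degMatrix ℝ + G.adjMatrix ℝ).PosSemidef := by
  refine Matrix.PosSemidef.of_dotProduct_mulVec_nonneg ?_ ?_
  · rw [Matrix.IsHermitian, conjTranspose_eq_transpose_of_trivial]
    exact ((SimpleGraph.isSymm_degMatrix ℝ G).add (SimpleGraph.isSymm_adjMatrix G))
  · intro x
    rw [star_trivial, signless_quad]
    positivity

theorem mulVec_finsetSum {ι : Type*} (s : Finset ι) (M : Matrix V V ℝ) (f : ι → V → ℝ) :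
    M *ᵥ (∑ j ∈ s, f j) = ∑ j ∈ s, M *ᵥ f j :=
  map_sum (Matrix.mulVecLin M) f s

theorem dotProduct_finsetSum {ι : Type*} (s : Finset ι) (v : V → ℝ) (f : ι → V → ℝ) :
    v ⬝ᵥ (∑ j ∈ s, f j) = ∑ j ∈ s, v ⬝ᵥ f j := by
  simp only [dotProduct, Finset.sum_apply, Finset.mul_sum]
  exact Finset.sum_comm

end EffResAux


/-- The normalized adjacency matrix `Â = D^{-1/2} A D^{-1/2}` of a graph. -/
noncomputable def nadj {V : Type*} [Fintype V] [DecidableEq V] (G : SimpleGraph V)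
    [DecidableRel G.Adj] : Matrix V V ℝ :=
  Matrix.diagonal (fun v => (Real.sqrt (G.degree v))⁻¹) * G.adjMatrix ℝ *
    Matrix.diagonal (fun v => (Real.sqrt (G.degree v))⁻¹)

/-- The effective resistance `R_{u,v} = (1_u − 1_v)ᵀ (L + (1/n)J)⁻¹ (1_u − 1_v)`. -/
noncomputable def effRes {V : Type*} [Fintype V] [DecidableEq V] (G : SimpleGraph V)
    [DecidableRel G.Adj] (u v : V) : ℝ :=
  (Pi.single u 1 - Pi.single v 1) ⬝ᵥ
    ((G.lapMatrix ℝ + ((Fintype.card V : ℝ))⁻¹ • Matrix.of (fun _ _ : V => (1 : ℝ)))⁻¹ *ᵥ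
      (Pi.single u 1 - Pi.single v 1))

set_option maxHeartbeats 3200000 in
/-- for a finite simple connected non-bipartite graph (non-bipartite = not
2-colorable) and vertices `u, v`, the series
`Σ_{i=0}^{∞} ((1/d_u)(Â^i)_{uu} + (1/d_v)(Â^i)_{vv} − (2/√(d_u d_v))(Â^i)_{uv})`
converges and equals the effective resistance `R_{u,v}`. -/
theorem effective_resistance_eq_tsum_adj_powers {V : Type*} [Fintype V] [DecidableEq V]
    (G : SimpleGraph V) [DecidableRel G.Adj]
    (hconn : G.Connected) (hnonbip : ¬ G.Colorable 2) (hcard : 2 ≤ Fintype.card V)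
    (u v : V) :
    Summable (fun i : ℕ =>
        (1 / (G.degree u : ℝ)) * (nadj G ^ i) u u +
        (1 / (G.degree v : ℝ)) * (nadj G ^ i) v v -
        (2 / Real.sqrt ((G.degree u : ℝ) * (G.degree v : ℝ))) * (nadj G ^ i) u v) ∧
      (∑' i : ℕ,
        ((1 / (G.degree u : ℝ)) * (nadj G ^ i) u u +
         (1 / (G.degree v : ℝ)) * (nadj G ^ i) v v -
         (2 / Real.sqrt ((G.degree u : ℝ) * (G.degree v : ℝ))) * (nadj G ^ i) u v)) =
      effRes G u v := by
  classical
  -- degrees are positive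
  have hdeg : ∀ p : V, 0 < (G.degree p : ℝ) := by
    intro p
    have hex : ∃ w, G.Adj p w := by
      obtain ⟨q, hq⟩ := Fintype.exists_ne_of_one_lt_card (by omega) p
      obtain ⟨w⟩ := hconn.preconnected p q
      cases w with
      | nil => exact absurd rfl hq.symm
      | cons h _ => exact ⟨_, h⟩
    exact_mod_cast (G.degree_pos_iff_exists_adj p).2 hex
  set s : V → ℝ := fun p => Real.sqrt (G.degree p) with hs_def
  have hs : ∀ p, 0 < s p := fun p => Real.sqrt_pos.2 (hdeg p)
  have hss : ∀ p, s p * s p = (G.degree p : ℝ) := fun p => Real.mul_self_sqrt (hdeg p).le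
  set Sinv : Matrix V V ℝ := Matrix.diagonal (fun p => (s p)⁻¹) with hSinv_def
  have hnadj : nadj G = Sinv * G.adjMatrix ℝ * Sinv := rfl
  have hSinvH : Sinvᴴ = Sinv := by
    -- diagonal real matrix is self-adjoint
    rw [conjTranspose_eq_transpose_of_trivial, Matrix.diagonal_transpose]
  -- `I - Â = Sinv L Sinv` and `I + Â = Sinv Q Sinv`
  have hSDS : Sinv * G.degMatrix ℝ * Sinv = 1 := by
    rw [hSinv_def, SimpleGraph.degMatrix, Matrix.diagonal_mul_diagonal,
      Matrix.diagonal_mul_diagonal]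
    ext p q
    rcases eq_or_ne p q with rfl | h
    · simp only [Matrix.diagonal_apply_eq, Pi.mul_apply, Matrix.one_apply_eq]
      rw [← hss p]
      field_simp
      rw [div_self (hs p).ne']
    · simp [Matrix.diagonal_apply_ne _ h, Matrix.one_apply_ne h]
  have h1 : (1 : Matrix V V ℝ) - nadj G = Sinv * G.lapMatrix ℝ * Sinv := by
    rw [SimpleGraph.lapMatrix, Matrix.mul_sub, Matrix.sub_mul, hSDS, ← hnadj]
  have h2 : (1 : Matrix V V ℝ) + nadj G = Sinv * (G.degMatrix ℝ + G.adjMatrix ℝ) * Sinv := by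
    rw [Matrix.mul_add, Matrix.add_mul, hSDS, ← hnadj]
  have hH : (nadj G).IsHermitian := by
    rw [hnadj]
    nth_rewrite 2 [← hSinvH]
    exact Matrix.isHermitian_mul_mul_conjTranspose Sinv
      (by rw [Matrix.IsHermitian, conjTranspose_eq_transpose_of_trivial,
            SimpleGraph.isSymm_adjMatrix])
  have hNpsd : ((1 : Matrix V V ℝ) - nadj G).PosSemidef := by
    rw [h1]
    nth_rewrite 2 [← hSinvH]
    exact (SimpleGraph.posSemidef_lapMatrix ℝ G).mul_mul_conjTranspose_same Sinv
  have hPpsd : ((1 : Matrix V V ℝ) + nadj G).PosSemidef := by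
    rw [h2]
    nth_rewrite 2 [← hSinvH]
    exact (EffResAux.posSemidef_signless G).mul_mul_conjTranspose_same Sinv
  set μ : V → ℝ := hH.eigenvalues with hμ_def
  set b := hH.eigenvectorBasis with hb_def
  set B : V → V → ℝ := fun j => ⇑(b j) with hB_def
  have hmulvec : ∀ j, nadj G *ᵥ B j = μ j • B j := fun j => hH.mulVec_eigenvectorBasis j
  have hortho : ∀ i j, B i ⬝ᵥ B j = if i = j then (1:ℝ) else 0 := by
    intro i j
    have h := (hH.eigenvectorBasis.orthonormal)
    rw [orthonormal_iff_ite] at h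
    have h' := h i j
    rw [PiLp.inner_apply] at h'
    simpa [dotProduct, starRingEnd_apply, hB_def, hb_def, mul_comm] using h'
  have hbound : ∀ j, 0 ≤ 1 - μ j ∧ 0 ≤ 1 + μ j := by
    intro j
    constructor
    · have h := hNpsd.dotProduct_mulVec_nonneg (B j)
      rw [star_trivial, Matrix.sub_mulVec, Matrix.one_mulVec, hmulvec j,
        dotProduct_sub, dotProduct_smul, hortho j j] at h
      simpa using h
    · have h := hPpsd.dotProduct_mulVec_nonneg (B j)
      rw [star_trivial, Matrix.add_mulVec, Matrix.one_mulVec, hmulvec j,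
        dotProduct_add, dotProduct_smul, hortho j j] at h
      simpa using h
  -- kernel of I - Â consists of multiples of s
  have hker1 : ∀ j, μ j = 1 → ∃ t : ℝ, ∀ p, B j p = t * s p := by
    intro j hj
    -- (1 - nadj) *ᵥ b j = 0
    have h0 : ((1 : Matrix V V ℝ) - nadj G) *ᵥ B j = 0 := by
      rw [Matrix.sub_mulVec, Matrix.one_mulVec, hmulvec j, hj, one_smul, sub_self]
    rw [h1] at h0
    have h0' : Sinv *ᵥ (G.lapMatrix ℝ *ᵥ (Sinv *ᵥ B j)) = 0 := by
      rw [Matrix.mulVec_mulVec, Matrix.mulVec_mulVec]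
      exact h0
    have hLz : G.lapMatrix ℝ *ᵥ (Sinv *ᵥ B j) = 0 := by
      funext p
      have := congrFun h0' p
      rw [hSinv_def, Matrix.mulVec_diagonal] at this
      have hne : (s p)⁻¹ ≠ 0 := inv_ne_zero (hs p).ne'
      simpa [hne] using this
    have hreach := (SimpleGraph.lapMatrix_mulVec_eq_zero_iff_forall_reachable (G := G)
      (x := Sinv *ᵥ B j)).1 hLz
    refine ⟨(s u)⁻¹ * B j u, fun p => ?_⟩
    have := hreach p u (hconn.preconnected p u)
    rw [hSinv_def, Matrix.mulVec_diagonal, Matrix.mulVec_diagonal] at this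
    have hne : s p ≠ 0 := (hs p).ne'
    field_simp at this ⊢
    rw [mul_comm] at this
    rw [this]
    ring
  -- no eigenvalue -1
  have hker2 : ∀ j, μ j ≠ -1 := by
    intro j hj
    have h0 : ((1 : Matrix V V ℝ) + nadj G) *ᵥ B j = 0 := by
      rw [Matrix.add_mulVec, Matrix.one_mulVec, hmulvec j, hj]
      funext p
      simp
    rw [h2] at h0
    have h0' : Sinv *ᵥ ((G.degMatrix ℝ + G.adjMatrix ℝ) *ᵥ (Sinv *ᵥ B j)) = 0 := by
      rw [Matrix.mulVec_mulVec, Matrix.mulVec_mulVec]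
      exact h0
    set z : V → ℝ := Sinv *ᵥ B j with hz_def
    have hQz : (G.degMatrix ℝ + G.adjMatrix ℝ) *ᵥ z = 0 := by
      funext p
      have := congrFun h0' p
      rw [hSinv_def, Matrix.mulVec_diagonal] at this
      have hne : (s p)⁻¹ ≠ 0 := inv_ne_zero (hs p).ne'
      simpa [hne] using this
    have halt : ∀ i j', G.Adj i j' → z i = - z j' := by
      refine (EffResAux.signless_quad_eq_zero_iff G z).1 ?_
      rw [hQz, dotProduct_zero]
    have habsz : ∀ i j', G.Reachable i j' → |z i| = |z j'| := by
      intro i j' ⟨wk⟩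
      induction wk with
      | nil => rfl
      | cons h _ ih => rw [← ih, halt _ _ h, abs_neg]
    have hbne : ∃ p, z p ≠ 0 := by
      by_contra hcon
      push_neg at hcon
      have hb0 : B j = fun _ => (0:ℝ) := by
        funext p
        have := hcon p
        rw [hz_def, hSinv_def, Matrix.mulVec_diagonal] at this
        have hne : (s p)⁻¹ ≠ 0 := inv_ne_zero (hs p).ne'
        exact (mul_eq_zero.1 this).resolve_left hne
      have h1' := hortho j j
      rw [if_pos rfl, hb0] at h1'
      simp [dotProduct] at h1'
    obtain ⟨p1, hp1⟩ := hbne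
    have hnz : ∀ p, z p ≠ 0 := by
      intro p
      have := habsz p p1 (hconn.preconnected p p1)
      intro h0''
      rw [h0'', abs_zero] at this
      exact hp1 (abs_eq_zero.1 this.symm)
    have : G.Colorable 2 := by
      refine ⟨SimpleGraph.Coloring.mk (fun p => if 0 < z p then 0 else 1) ?_⟩
      intro a b' hadj
      have hz1 := halt a b' hadj
      by_cases hp : 0 < z a
      · have : ¬ (0 < z b') := by
          intro h'
          rw [hz1] at hp
          linarith
        simp [hp, this]
      · have hlt : z a < 0 := lt_of_le_of_ne (not_lt.1 hp) (hnz a)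
        have : 0 < z b' := by
          rw [hz1] at hlt
          linarith
        simp [hp, this]
    exact hnonbip this
  have habs : ∀ j, μ j ≠ 1 → |μ j| < 1 := by
    intro j h
    rcases hbound j with ⟨h1', h2'⟩
    rw [abs_lt]
    constructor
    · rcases lt_or_eq_of_le (by linarith : (-1:ℝ) ≤ μ j) with h' | h'
      · exact h'
      · exact absurd h'.symm (hker2 j)
    · rcases lt_or_eq_of_le (by linarith : μ j ≤ 1) with h' | h'
      · exact h'
      · exact absurd h' h
  set y : V → ℝ := Pi.single u 1 - Pi.single v 1 with hy_def
  set x : V → ℝ := fun p => (s p)⁻¹ * y p with hx_def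
  set c : V → ℝ := fun j => B j ⬝ᵥ x with hc_def
  have hc1 : ∀ j, μ j = 1 → c j = 0 := by
    intro j hj
    obtain ⟨t, ht⟩ := hker1 j hj
    rw [hc_def]
    simp only [dotProduct, hx_def]
    have key : ∀ p, B j p * ((s p)⁻¹ * y p) = t * y p := by
      intro p
      rw [ht p, mul_assoc, ← mul_assoc (s p), mul_inv_cancel₀ (hs p).ne', one_mul]
    rw [Finset.sum_congr rfl (fun p _ => key p), ← Finset.mul_sum, hy_def]
    have : ∑ p, (Pi.single u 1 - Pi.single v 1 : V → ℝ) p = 0 := by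
      simp [Pi.single_apply, Finset.sum_sub_distrib]
    rw [this, mul_zero]
  -- expansion of x in the eigenbasis
  have hxfun : x = ∑ j, c j • B j := by
    have hrepr : ∀ j, b.repr (WithLp.toLp 2 x) j = c j := by
      intro j
      rw [OrthonormalBasis.repr_apply_apply]
      simp only [PiLp.inner_apply, RCLike.inner_apply, starRingEnd_apply, star_trivial]
      rw [hc_def]
      simp [dotProduct, hB_def, mul_comm]
    have hsum := b.sum_repr (WithLp.toLp 2 x)
    funext p
    have hp := congrArg
      (fun z : EuclideanSpace ℝ V => (inner ℝ (EuclideanSpace.single p (1:ℝ)) z : ℝ)) hsum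
    simp only [inner_sum, inner_smul_right, EuclideanSpace.inner_single_left, _root_.map_one, one_mul,
      star_trivial] at hp
    rw [show (x p : ℝ) = ∑ j, b.repr (WithLp.toLp 2 x) j * b j p from hp.symm,
      Finset.sum_apply]
    refine Finset.sum_congr rfl fun j _ => ?_
    rw [hrepr j, Pi.smul_apply, smul_eq_mul]
  have hpow : ∀ (i : ℕ) j, (nadj G ^ i) *ᵥ B j = μ j ^ i • B j := by
    intro i j
    induction i with
    | zero => simp
    | succ i ih =>
        rw [pow_succ, ← Matrix.mulVec_mulVec, hmulvec, Matrix.mulVec_smul, ih, smul_smul,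
          pow_succ]
        ring_nf
  have ha : ∀ i : ℕ, x ⬝ᵥ ((nadj G ^ i) *ᵥ x) = ∑ j, (c j)^2 * μ j ^ i := by
    intro i
    have hMx : (nadj G ^ i) *ᵥ x = ∑ j, (c j * μ j ^ i) • B j := by
      conv_lhs => rw [hxfun]
      rw [EffResAux.mulVec_finsetSum]
      refine Finset.sum_congr rfl fun j _ => ?_
      rw [Matrix.mulVec_smul, hpow i j, smul_smul]
    rw [hMx, EffResAux.dotProduct_finsetSum]
    refine Finset.sum_congr rfl fun j _ => ?_
    rw [dotProduct_smul, show x ⬝ᵥ B j = c j from by rw [hc_def, dotProduct_comm],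
      smul_eq_mul]
    ring
  -- identification of the series terms
  have hterm : ∀ i : ℕ,
      (1 / (G.degree u : ℝ)) * (nadj G ^ i) u u +
        (1 / (G.degree v : ℝ)) * (nadj G ^ i) v v -
        (2 / Real.sqrt ((G.degree u : ℝ) * (G.degree v : ℝ))) * (nadj G ^ i) u v
      = x ⬝ᵥ ((nadj G ^ i) *ᵥ x) := by
    intro i
    have hxs : x = Pi.single u ((s u)⁻¹) - Pi.single v ((s v)⁻¹) := by
      funext p
      by_cases hpu : p = u <;> by_cases hpv : p = v <;>
        simp [hx_def, hy_def, Pi.single_apply, hpu, hpv, mul_sub] <;>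
        (try (split_ifs with hq <;> simp [hq]))
    have hsym : (nadj G ^ i) v u = (nadj G ^ i) u v := by
      have hh := hH.pow i
      have h' := congrFun (congrFun hh u) v
      rw [Matrix.conjTranspose_apply] at h'
      exact h'
    have hdu : (G.degree u : ℝ) = s u * s u := (hss u).symm
    have hdv : (G.degree v : ℝ) = s v * s v := (hss v).symm
    have h2s : Real.sqrt ((G.degree u : ℝ) * (G.degree v : ℝ)) = s u * s v := by
      rw [Real.sqrt_mul (Nat.cast_nonneg _)]
    rw [hxs]
    simp only [Matrix.mulVec_sub, dotProduct_sub, sub_dotProduct,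
      Matrix.mulVec_single, single_dotProduct, Pi.smul_apply, op_smul_eq_mul, Matrix.col_apply]
    rw [hsym, h2s, hdu, hdv]
    have hsu := (hs u).ne'
    have hsv := (hs v).ne'
    field_simp
    ring
  have hfun : (fun i : ℕ =>
      (1 / (G.degree u : ℝ)) * (nadj G ^ i) u u +
        (1 / (G.degree v : ℝ)) * (nadj G ^ i) v v -
        (2 / Real.sqrt ((G.degree u : ℝ) * (G.degree v : ℝ))) * (nadj G ^ i) u v)
      = fun i => ∑ j, (c j)^2 * μ j ^ i := by
    funext i; rw [hterm i, ha i]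
  have hsummand : ∀ j : V, Summable (fun i : ℕ => (c j)^2 * μ j ^ i) := by
    intro j
    by_cases h : μ j = 1
    · have : (fun i : ℕ => (c j)^2 * μ j ^ i) = fun _ => 0 := by
        funext i; rw [hc1 j h]; ring
      rw [this]; exact summable_zero
    · exact (summable_geometric_of_abs_lt_one (habs j h)).mul_left _
  have hsum : Summable (fun i : ℕ => ∑ j, (c j)^2 * μ j ^ i) :=
    summable_sum (fun j _ => hsummand j)
  have htsum : (∑' i : ℕ, ∑ j, (c j)^2 * μ j ^ i) = ∑ j, (c j)^2 * (1 - μ j)⁻¹ := by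
    rw [Summable.tsum_finsetSum (fun j _ => hsummand j)]
    refine Finset.sum_congr rfl fun j _ => ?_
    by_cases h : μ j = 1
    · simp [hc1 j h]
    · rw [tsum_mul_left, tsum_geometric_of_abs_lt_one (habs j h)]
  -- the resistance side
  set zz : V → ℝ := ∑ j, (c j * (1 - μ j)⁻¹) • B j with hzz_def
  have hNzz : ((1 : Matrix V V ℝ) - nadj G) *ᵥ zz = x := by
    rw [hzz_def, EffResAux.mulVec_finsetSum, hxfun]
    refine Finset.sum_congr rfl fun j _ => ?_
    rw [Matrix.mulVec_smul, Matrix.sub_mulVec, Matrix.one_mulVec, hmulvec j]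
    rw [show B j - μ j • B j = (1 - μ j) • B j by rw [sub_smul, one_smul]]
    rw [smul_smul]
    by_cases h : μ j = 1
    · rw [h, hc1 j h]
      simp
    · congr 1
      rw [mul_assoc, inv_mul_cancel₀ (sub_ne_zero.2 (Ne.symm h)), mul_one]
  have hxzz : x ⬝ᵥ zz = ∑ j, (c j)^2 * (1 - μ j)⁻¹ := by
    rw [hzz_def, EffResAux.dotProduct_finsetSum]
    refine Finset.sum_congr rfl fun j _ => ?_
    rw [dotProduct_smul, show x ⬝ᵥ B j = c j from by rw [hc_def, dotProduct_comm],
      smul_eq_mul]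
    ring
  set w : V → ℝ := fun p => (s p)⁻¹ * zz p with hw_def
  have hLw : G.lapMatrix ℝ *ᵥ w = y := by
    have hNz : Sinv *ᵥ (G.lapMatrix ℝ *ᵥ (Sinv *ᵥ zz)) = x := by
      rw [Matrix.mulVec_mulVec, Matrix.mulVec_mulVec, ← h1]
      exact hNzz
    have hw_eq : Sinv *ᵥ zz = w := by
      funext p
      simp [hSinv_def, Matrix.mulVec_diagonal, hw_def]
    rw [hw_eq] at hNz
    funext p
    have hp := congrFun hNz p
    rw [hSinv_def, Matrix.mulVec_diagonal] at hp
    rw [show x p = (s p)⁻¹ * y p from by rw [hx_def]] at hp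
    exact mul_left_cancel₀ (inv_ne_zero (hs p).ne') hp
  set n : ℝ := (Fintype.card V : ℝ) with hn_def
  have hn : 0 < n := by
    rw [hn_def]; exact_mod_cast (by omega : 0 < Fintype.card V)
  set σ : ℝ := ∑ p, w p with hσ_def
  set w' : V → ℝ := fun p => w p - σ / n with hw'_def
  set M : Matrix V V ℝ :=
    G.lapMatrix ℝ + (n : ℝ)⁻¹ • Matrix.of (fun _ _ : V => (1 : ℝ)) with hM_def
  have hMw' : M *ᵥ w' = y := by
    have hsplit : w' = w + (-(σ / n)) • (fun _ => (1:ℝ)) := by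
      funext p
      simp [hw'_def]
      ring
    have hLw' : G.lapMatrix ℝ *ᵥ w' = y := by
      rw [hsplit, Matrix.mulVec_add, Matrix.mulVec_smul,
        SimpleGraph.lapMatrix_mulVec_const_eq_zero, smul_zero, add_zero, hLw]
    have hJw' : (Matrix.of (fun _ _ : V => (1:ℝ))) *ᵥ w' = 0 := by
      funext p
      simp only [Matrix.mulVec, dotProduct, Matrix.of_apply, one_mul, Pi.zero_apply]
      simp only [show ∀ q, w' q = w q - σ / n from fun q => by rw [hw'_def]]
      rw [Finset.sum_sub_distrib, ← hσ_def, Finset.sum_const, Finset.card_univ, nsmul_eq_mul,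
        ← hn_def]
      field_simp
      ring
    rw [hM_def, Matrix.add_mulVec, Matrix.smul_mulVec, hLw', hJw', smul_zero, add_zero]
  have hMpd : M.PosDef := by
    refine Matrix.PosDef.of_dotProduct_mulVec_pos ?_ ?_
    · rw [hM_def]
      refine Matrix.IsHermitian.add (SimpleGraph.posSemidef_lapMatrix ℝ G).1 ?_
      rw [Matrix.IsHermitian, Matrix.conjTranspose_smul, star_trivial]
      congr 1
    · intro t ht
      rw [star_trivial, hM_def, Matrix.add_mulVec, dotProduct_add, Matrix.smul_mulVec,
        dotProduct_smul]
      have hJt : t ⬝ᵥ ((Matrix.of (fun _ _ : V => (1:ℝ))) *ᵥ t) = (∑ p, t p)^2 := by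
        simp only [Matrix.mulVec, dotProduct, Matrix.of_apply, one_mul]
        rw [← Finset.sum_mul, sq]
      rw [hJt, smul_eq_mul]
      have hL0 : 0 ≤ t ⬝ᵥ (G.lapMatrix ℝ *ᵥ t) := by
        have := (SimpleGraph.posSemidef_lapMatrix ℝ G).dotProduct_mulVec_nonneg t
        rwa [star_trivial] at this
      by_cases hsum0 : ∑ p, t p = 0
      · have hne : t ⬝ᵥ (G.lapMatrix ℝ *ᵥ t) ≠ 0 := by
          intro h0
          have hconst := (SimpleGraph.lapMatrix_toLinearMap₂'_apply'_eq_zero_iff_forall_reachable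
            G t).1 (by rw [Matrix.toLinearMap₂'_apply']; exact h0)
          have hconstp : ∀ p, t p = t u := fun p => hconst p u (hconn.preconnected p u)
          have hsum : ∑ p, t p = (Fintype.card V : ℝ) * t u := by
            rw [Finset.sum_congr rfl (fun p _ => hconstp p), Finset.sum_const,
              Finset.card_univ, nsmul_eq_mul]
          rw [hsum0] at hsum
          have hcard0 : (Fintype.card V : ℝ) ≠ 0 := by
            exact_mod_cast (by omega : Fintype.card V ≠ 0)
          have htu : t u = 0 := by
            rcases mul_eq_zero.1 hsum.symm with h' | h'
            · exact absurd h' hcard0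
            · exact h'
          exact ht (funext fun p => by rw [hconstp p, htu]; rfl)
        have hLpos := lt_of_le_of_ne hL0 (Ne.symm hne)
        rw [hsum0]
        simpa using hLpos
      · have hpos : 0 < n⁻¹ * (∑ p, t p)^2 := by
          have := hn
          positivity
        exact add_pos_of_nonneg_of_pos hL0 hpos
  have hdet : IsUnit M.det := isUnit_iff_ne_zero.2 (ne_of_gt hMpd.det_pos)
  have hinv : M⁻¹ *ᵥ y = w' := by
    rw [← hMw', Matrix.mulVec_mulVec, Matrix.nonsing_inv_mul M hdet, Matrix.one_mulVec]
  have hysum : ∑ p, y p = 0 := by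
    simp [hy_def, Pi.single_apply, Finset.sum_sub_distrib]
  have heff : effRes G u v = ∑ j, (c j)^2 * (1 - μ j)⁻¹ := by
    have hyw : y ⬝ᵥ w' = x ⬝ᵥ zz := by
      have e1 : y ⬝ᵥ w' = ∑ p, (y p * w p - y p * (σ / n)) := by
        simp only [dotProduct]
        refine Finset.sum_congr rfl fun p _ => ?_
        rw [show w' p = w p - σ / n from by rw [hw'_def]]
        ring
      rw [e1, Finset.sum_sub_distrib, ← Finset.sum_mul, hysum, zero_mul, sub_zero]
      simp only [dotProduct]
      refine Finset.sum_congr rfl fun p _ => ?_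
      rw [show w p = (s p)⁻¹ * zz p from by rw [hw_def],
        show x p = (s p)⁻¹ * y p from by rw [hx_def]]
      ring
    rw [show effRes G u v = y ⬝ᵥ (M⁻¹ *ᵥ y) from rfl, hinv, hyw, hxzz]
  constructor
  · rw [hfun]; exact hsum
  · rw [hfun, htsum, heff]
end

section
/- Let G be a finite simple connected graph on n vertices with Laplacian L whose second-smallest eigenvalue is σ₂ > 0, and let R_max = max over pairs of distinct vertices u, v of the effective resistance R_{u,v}. Then 1/(n σ₂) ≤ R_max ≤ 2/σ₂. -/
open Matrix Finset

section helpers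

variable {V : Type*} [Fintype V] [DecidableEq V] (G : SimpleGraph V) [DecidableRel G.Adj]

private lemma lap_quad_ge' (hconn : G.Connected) (σ₂ : ℝ)
    (hσmin : ∀ t : ℝ, Module.End.HasEigenvalue (Matrix.mulVecLin (G.lapMatrix ℝ)) t →
      t ≠ 0 → σ₂ ≤ t)
    (y : V → ℝ) (hy : ∑ i, y i = 0) :
    σ₂ * (∑ i, y i * y i) ≤ y ⬝ᵥ (G.lapMatrix ℝ *ᵥ y) := by
  have hL : (G.lapMatrix ℝ).IsHermitian := (SimpleGraph.posSemidef_lapMatrix ℝ G).1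
  set b := hL.eigenvectorBasis with hb
  set μ := hL.eigenvalues with hμ
  have hsym : (G.lapMatrix ℝ)ᵀ = G.lapMatrix ℝ := (SimpleGraph.isSymm_lapMatrix (R := ℝ) (G := G))
  set c : V → ℝ := fun j => ⇑(b j) ⬝ᵥ y with hc
  have claim1 : ∑ i, y i * y i = ∑ j, (c j)^2 := by
    have h := b.sum_inner_mul_inner ((WithLp.equiv 2 (V → ℝ)).symm y) ((WithLp.equiv 2 (V → ℝ)).symm y)
    simp only [PiLp.inner_apply, RCLike.inner_apply, starRingEnd_apply, star_trivial,
      WithLp.equiv_symm_apply, WithLp.ofLp_toLp] at h ⊢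
    rw [← h]
    refine Finset.sum_congr rfl fun j _ => ?_
    have hcj : c j = ∑ i, b j i * y i := rfl
    rw [sq, hcj]
    congr 1
    exact Finset.sum_congr rfl fun i _ => mul_comm _ _
  have hdot : ∀ j, ⇑(b j) ⬝ᵥ (G.lapMatrix ℝ *ᵥ y) = μ j * c j := by
    intro j
    rw [Matrix.dotProduct_mulVec, ← Matrix.mulVec_transpose, hsym,
      hL.mulVec_eigenvectorBasis, smul_dotProduct]
    rfl
  have claim2 : y ⬝ᵥ (G.lapMatrix ℝ *ᵥ y) = ∑ j, μ j * (c j)^2 := by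
    have h := b.sum_inner_mul_inner ((WithLp.equiv 2 (V → ℝ)).symm y)
      ((WithLp.equiv 2 (V → ℝ)).symm (G.lapMatrix ℝ *ᵥ y))
    simp only [PiLp.inner_apply, RCLike.inner_apply, starRingEnd_apply, star_trivial,
      WithLp.equiv_symm_apply, WithLp.ofLp_toLp] at h
    simp only [mul_comm ((G.lapMatrix ℝ *ᵥ y) _), mul_comm (WithLp.ofLp (b _) _ : ℝ) (y _)] at h
    rw [show y ⬝ᵥ (G.lapMatrix ℝ *ᵥ y) = ∑ i, y i * (G.lapMatrix ℝ *ᵥ y) i from rfl, ← h]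
    refine Finset.sum_congr rfl fun j _ => ?_
    have h1 : ∑ i, b j i * (G.lapMatrix ℝ *ᵥ y) i = μ j * c j := hdot j
    have h2 : ∑ i, y i * b j i = c j := by
      have hcj : c j = ∑ i, b j i * y i := rfl
      rw [hcj]; exact Finset.sum_congr rfl fun i _ => mul_comm _ _
    rw [h1, h2]; ring
  have hzero : ∀ j, μ j = 0 → c j = 0 := by
    intro j hj
    have h0 : G.lapMatrix ℝ *ᵥ ⇑(b j) = 0 := by
      rw [hL.mulVec_eigenvectorBasis, ← hμ, hj, zero_smul]
    have hconst : ∀ i k : V, b j i = b j k := by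
      have := (SimpleGraph.lapMatrix_toLinearMap₂'_apply'_eq_zero_iff_forall_reachable G ⇑(b j)).1
        (by rw [Matrix.toLinearMap₂'_apply', h0, dotProduct_zero])
      exact fun i k => this i k (hconn.preconnected i k)
    obtain ⟨i₀⟩ := hconn.nonempty
    have : c j = b j i₀ * ∑ i, y i := by
      have hcj : c j = ∑ i, b j i * y i := rfl
      rw [hcj, Finset.mul_sum]
      exact Finset.sum_congr rfl fun i _ => by rw [hconst i i₀]
    rw [this, hy, mul_zero]
  have hcases : ∀ j, σ₂ * (c j)^2 ≤ μ j * (c j)^2 := by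
    intro j
    by_cases hj : μ j = 0
    · rw [hzero j hj, hj]; simp
    · have hevec : Module.End.HasEigenvector (Matrix.mulVecLin (G.lapMatrix ℝ)) (μ j)
          ((WithLp.equiv 2 (V → ℝ)) (b j)) := by
        refine ⟨Module.End.mem_eigenspace_iff.2 ?_, ?_⟩
        · rw [Matrix.mulVecLin_apply]; exact hL.mulVec_eigenvectorBasis j
        · intro h0
          exact (b.orthonormal.ne_zero j) (by ext i; exact congrFun h0 i)
      exact mul_le_mul_of_nonneg_right
        (hσmin _ (Module.End.hasEigenvalue_of_hasEigenvector hevec) hj) (sq_nonneg _)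
  calc σ₂ * (∑ i, y i * y i) = ∑ j, σ₂ * (c j)^2 := by rw [claim1, Finset.mul_sum]
    _ ≤ ∑ j, μ j * (c j)^2 := Finset.sum_le_sum fun j _ => hcases j
    _ = y ⬝ᵥ (G.lapMatrix ℝ *ᵥ y) := claim2.symm

private lemma genCS {M : Matrix V V ℝ} (hM : M.PosDef) (hsym : Mᵀ = M) (w z : V → ℝ) :
    (w ⬝ᵥ (M *ᵥ z))^2 ≤ (w ⬝ᵥ (M *ᵥ w)) * (z ⬝ᵥ (M *ᵥ z)) := by
  by_cases hz : z = 0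
  · simp [hz]
  · set A := w ⬝ᵥ (M *ᵥ w)
    set B := w ⬝ᵥ (M *ᵥ z)
    set C := z ⬝ᵥ (M *ᵥ z)
    have hC : 0 < C := by
      have := hM.dotProduct_mulVec_pos hz
      simpa using this
    have hswap : z ⬝ᵥ (M *ᵥ w) = B := by
      rw [Matrix.dotProduct_mulVec, ← Matrix.mulVec_transpose, hsym, dotProduct_comm]
    have hkey : ∀ t : ℝ, 0 ≤ A - 2 * t * B + t^2 * C := by
      intro t
      have h0 : 0 ≤ (w - t • z) ⬝ᵥ (M *ᵥ (w - t • z)) := by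
        have := hM.posSemidef.dotProduct_mulVec_nonneg (w - t • z)
        simpa using this
      have hexp : (w - t • z) ⬝ᵥ (M *ᵥ (w - t • z)) = A - 2 * t * B + t^2 * C := by
        rw [Matrix.mulVec_sub, Matrix.mulVec_smul, sub_dotProduct,
          dotProduct_sub, dotProduct_sub, smul_dotProduct,
          dotProduct_smul, smul_dotProduct, dotProduct_smul, hswap]
        simp only [smul_eq_mul]
        ring
      rw [hexp] at h0
      exact h0
    have := hkey (B / C)
    have h2 : 0 ≤ A - B^2 / C := by
      have : A - 2 * (B/C) * B + (B/C)^2 * C = A - B^2/C := by field_simp; ring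
      linarith [this ▸ hkey (B/C)]
    have : B^2 / C ≤ A := by linarith
    calc B^2 = (B^2 / C) * C := by field_simp
      _ ≤ A * C := mul_le_mul_of_nonneg_right this hC.le

end helpers

/-- for a connected graph `G` on `n` vertices with Laplacian `L` whose
second-smallest eigenvalue is `σ₂ > 0` (characterized, since `G` is connected, as the smallest
nonzero eigenvalue of `L`), and `R_max` the maximum effective resistance over pairs of distinct
vertices, `1/(n σ₂) ≤ R_max ≤ 2/σ₂`. -/
theorem max_resistance_spectral_gap_bounds {V : Type*} [Fintype V] [DecidableEq V]
    (G : SimpleGraph V) [DecidableRel G.Adj]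
    (hconn : G.Connected) (hcard : 2 ≤ Fintype.card V)
    (σ₂ : ℝ) (hσpos : 0 < σ₂)
    (hσeig : Module.End.HasEigenvalue (Matrix.mulVecLin (G.lapMatrix ℝ)) σ₂)
    (hσmin : ∀ t : ℝ, Module.End.HasEigenvalue (Matrix.mulVecLin (G.lapMatrix ℝ)) t →
      t ≠ 0 → σ₂ ≤ t)
    (Rmax : ℝ)
    (hRmax : IsGreatest {x : ℝ | ∃ u v : V, u ≠ v ∧ x = effRes G u v} Rmax) :
    1 / ((Fintype.card V : ℝ) * σ₂) ≤ Rmax ∧ Rmax ≤ 2 / σ₂ := by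
  have hVne : Nonempty V := Fintype.card_pos_iff.1 (by omega)
  have hn0 : (0:ℝ) < (Fintype.card V : ℝ) := by
    exact_mod_cast Nat.lt_of_lt_of_le Nat.zero_lt_two hcard
  set n : ℝ := (Fintype.card V : ℝ) with hn
  set L : Matrix V V ℝ := G.lapMatrix ℝ with hLdef
  have hLsym : Lᵀ = L := (SimpleGraph.isSymm_lapMatrix (R := ℝ) (G := G))
  set M : Matrix V V ℝ := L + n⁻¹ • Matrix.of (fun _ _ : V => (1 : ℝ)) with hMdef
  -- quadratic form splitting
  have hquad : ∀ x : V → ℝ, x ⬝ᵥ (M *ᵥ x) = x ⬝ᵥ (L *ᵥ x) + n⁻¹ * (∑ i, x i)^2 := by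
    intro x
    rw [hMdef, Matrix.add_mulVec, dotProduct_add, Matrix.smul_mulVec,
      dotProduct_smul]
    congr 1
    have : (Matrix.of (fun _ _ : V => (1:ℝ))) *ᵥ x = fun _ => ∑ j, x j := by
      ext i; simp [Matrix.mulVec, dotProduct]
    rw [this]
    simp only [smul_eq_mul]
    congr 1
    rw [sq]
    simp [dotProduct, ← Finset.sum_mul]
  -- sum preserved by M
  have hMone : M *ᵥ (fun _ => (1:ℝ)) = fun _ => (1:ℝ) := by
    rw [hMdef, Matrix.add_mulVec, SimpleGraph.lapMatrix_mulVec_const_eq_zero,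
      Matrix.smul_mulVec]
    ext i
    simp [Matrix.mulVec, dotProduct, hn]
  have hsumM : ∀ y : V → ℝ, ∑ i, (M *ᵥ y) i = ∑ i, y i := by
    intro y
    have h1 : ∑ i, (M *ᵥ y) i = (fun _ => (1:ℝ)) ⬝ᵥ (M *ᵥ y) := by
      simp [dotProduct]
    have hMsym : Mᵀ = M := by
      rw [hMdef, Matrix.transpose_add, hLsym, Matrix.transpose_smul]
      congr 1
    rw [h1, Matrix.dotProduct_mulVec, ← Matrix.mulVec_transpose, hMsym, hMone]
    simp [dotProduct]
  have hMsym : Mᵀ = M := by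
    rw [hMdef, Matrix.transpose_add, hLsym, Matrix.transpose_smul]
    congr 1
  -- M is positive definite
  have hMpd : M.PosDef := by
    refine Matrix.PosDef.of_dotProduct_mulVec_pos ?_ ?_
    · rw [Matrix.IsHermitian, Matrix.conjTranspose_eq_transpose_of_trivial, hMsym]
    · intro x hx
      simp only [star_trivial]
      rw [hquad x]
      have h1 : 0 ≤ x ⬝ᵥ (L *ᵥ x) := by
        have := (SimpleGraph.posSemidef_lapMatrix ℝ G).dotProduct_mulVec_nonneg x
        simpa using this
      have h2 : 0 ≤ n⁻¹ * (∑ i, x i)^2 := by positivity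
      rcases lt_or_eq_of_le h1 with h | h
      · linarith
      rcases lt_or_eq_of_le h2 with h' | h'
      · linarith
      exfalso
      -- both zero: derive x = 0
      have hxconst : ∀ i j : V, x i = x j := by
        have hz : Matrix.toLinearMap₂' ℝ (G.lapMatrix ℝ) x x = 0 := by
          rw [Matrix.toLinearMap₂'_apply']
          exact h.symm ▸ rfl
        have := (SimpleGraph.lapMatrix_toLinearMap₂'_apply'_eq_zero_iff_forall_reachable G x).1 hz
        exact fun i j => this i j (hconn.preconnected i j)
      have hxsum : ∑ i, x i = 0 := by
        have : n⁻¹ * (∑ i, x i)^2 = 0 := h'.symm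
        have h3 : (∑ i, x i)^2 = 0 := by
          rcases mul_eq_zero.1 this with h | h
          · exact absurd h (inv_ne_zero hn0.ne')
          · exact h
        exact pow_eq_zero_iff (two_ne_zero) |>.1 h3
      apply hx
      obtain ⟨i₀⟩ := hVne
      have : ∑ i, x i = (Fintype.card V : ℝ) * x i₀ := by
        rw [Finset.sum_congr rfl fun i _ => hxconst i i₀]
        simp [Finset.card_univ, mul_comm]
      have hx0 : x i₀ = 0 := by
        rw [hxsum] at this
        rcases mul_eq_zero.1 this.symm with h | h
        · exact absurd h hn0.ne'
        · exact h
      ext i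
      rw [hxconst i i₀, hx0]; rfl
  have hdet : IsUnit M.det := isUnit_iff_ne_zero.2 hMpd.det_pos.ne'
  have hMinv : ∀ x : V → ℝ, M *ᵥ (M⁻¹ *ᵥ x) = x := by
    intro x
    rw [Matrix.mulVec_mulVec, Matrix.mul_nonsing_inv _ hdet, Matrix.one_mulVec]
  have hsuminv : ∀ x : V → ℝ, ∑ i, x i = 0 → ∑ i, (M⁻¹ *ᵥ x) i = 0 := by
    intro x hx
    have := hsumM (M⁻¹ *ᵥ x)
    rw [hMinv] at this
    rw [← this, hx]
  have heff : ∀ u v : V, ∀ xv : V → ℝ, xv = Pi.single u 1 - Pi.single v 1 →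
      effRes G u v = xv ⬝ᵥ (M⁻¹ *ᵥ xv) := by
    intro u v xv hxv; subst hxv; rfl
  have hxsum : ∀ u v : V, ∑ i, (Pi.single u 1 - Pi.single v 1 : V → ℝ) i = 0 := by
    intro u v
    simp [Finset.sum_sub_distrib]
  have hxdot : ∀ (u v : V) (y : V → ℝ),
      (Pi.single u 1 - Pi.single v 1 : V → ℝ) ⬝ᵥ y = y u - y v := by
    intro u v y
    rw [sub_dotProduct, single_dotProduct, single_dotProduct]
    ring
  -- Upper bound for each pair
  have upper : ∀ u v : V, u ≠ v → effRes G u v ≤ 2/σ₂ := by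
    intro u v huv
    set x : V → ℝ := Pi.single u 1 - Pi.single v 1 with hxdef
    set y : V → ℝ := M⁻¹ *ᵥ x with hydef
    have hysum : ∑ i, y i = 0 := hsuminv x (hxsum u v)
    have hs : effRes G u v = x ⬝ᵥ y := heff u v x rfl
    have hq : x ⬝ᵥ y = y ⬝ᵥ (M *ᵥ y) := by
      conv_lhs => rw [← hMinv x]
      rw [dotProduct_comm, ← hydef]
    have hyL : y ⬝ᵥ (M *ᵥ y) = y ⬝ᵥ (L *ᵥ y) := by
      rw [hquad y, hysum]
      simp
    have hlow : σ₂ * (∑ i, y i * y i) ≤ x ⬝ᵥ y := by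
      rw [hq, hyL]
      exact lap_quad_ge' G hconn σ₂ hσmin y hysum
    have hq0 : (0:ℝ) ≤ ∑ i, y i * y i := Finset.sum_nonneg fun i _ => mul_self_nonneg _
    have hs0 : (0:ℝ) ≤ x ⬝ᵥ y := le_trans (by positivity) hlow
    have hCS : (x ⬝ᵥ y)^2 ≤ 2 * (∑ i, y i * y i) := by
      have h1 : (∑ i, x i * y i)^2 ≤ (∑ i, x i^2) * (∑ i, y i^2) :=
        Finset.sum_mul_sq_le_sq_mul_sq univ x y
      have hxx : ∑ i, x i^2 = 2 := by
        simp only [hxdef, Pi.sub_apply, Pi.single_apply, sub_sq]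
        rw [Finset.sum_add_distrib, Finset.sum_sub_distrib]
        simp [Finset.sum_ite_eq', huv, Ne.symm huv, mul_ite, ite_mul]
        norm_num
      have hxy : x ⬝ᵥ y = ∑ i, x i * y i := rfl
      have hyy : ∑ i, y i^2 = ∑ i, y i * y i := by simp [sq]
      rw [hxy, ← hyy] at *
      calc (∑ i, x i * y i)^2 ≤ (∑ i, x i^2) * (∑ i, y i^2) := h1
        _ = 2 * (∑ i, y i^2) := by rw [hxx]
    rw [hs, le_div_iff₀ hσpos]
    rcases hs0.eq_or_lt with h | h
    · rw [← h]; norm_num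
    · have hkey : σ₂ * (x ⬝ᵥ y)^2 ≤ 2 * (x ⬝ᵥ y) := by
        calc σ₂ * (x ⬝ᵥ y)^2 ≤ σ₂ * (2 * (∑ i, y i * y i)) :=
              mul_le_mul_of_nonneg_left hCS hσpos.le
          _ = 2 * (σ₂ * (∑ i, y i * y i)) := by ring
          _ ≤ 2 * (x ⬝ᵥ y) := by linarith
      have : ((x ⬝ᵥ y) * σ₂) * (x ⬝ᵥ y) ≤ 2 * (x ⬝ᵥ y) := by nlinarith [hkey]
      exact le_of_mul_le_mul_right this h
  -- Lower bound
  obtain ⟨w, hw⟩ := hσeig.exists_hasEigenvector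
  have hLw : L *ᵥ w = σ₂ • w := by
    have := Module.End.mem_eigenspace_iff.1 hw.1
    rwa [Matrix.mulVecLin_apply] at this
  have hwsum : ∑ i, w i = 0 := by
    have h1 : (fun _ => (1:ℝ)) ⬝ᵥ (L *ᵥ w) = σ₂ * ∑ i, w i := by
      rw [hLw]
      simp [dotProduct, Finset.mul_sum]
    have h2 : (fun _ => (1:ℝ)) ⬝ᵥ (L *ᵥ w) = 0 := by
      rw [Matrix.dotProduct_mulVec, ← Matrix.mulVec_transpose, hLsym,
        SimpleGraph.lapMatrix_mulVec_const_eq_zero]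
      simp
    have := h1.symm.trans h2
    rcases mul_eq_zero.1 this with h | h
    · exact absurd h hσpos.ne'
    · exact h
  obtain ⟨a, ha⟩ := Finite.exists_max w
  obtain ⟨b, hb⟩ := Finite.exists_min w
  have hwne : ∃ i, w i ≠ 0 := by
    by_contra h
    push_neg at h
    exact hw.2 (funext h)
  have hwa0 : 0 ≤ w a := by
    by_contra h
    push_neg at h
    have : ∑ i, w i < 0 := by
      have : ∀ i ∈ univ, w i < 0 := fun i _ => lt_of_le_of_lt (ha i) h
      exact Finset.sum_neg this ⟨Classical.arbitrary V, Finset.mem_univ _⟩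
    linarith [hwsum]
  have hwb0 : w b ≤ 0 := by
    by_contra h
    push_neg at h
    have : 0 < ∑ i, w i := Finset.sum_pos (fun i _ => lt_of_lt_of_le h (hb i))
      ⟨Classical.arbitrary V, Finset.mem_univ _⟩
    linarith [hwsum]
  have hab : w b < w a := by
    rcases lt_or_eq_of_le (le_trans (hb a) (le_refl _)) with h | h
    · exact h
    · exfalso
      obtain ⟨i, hi⟩ := hwne
      have h1 : w i ≤ w a := ha i
      have h2 : w b ≤ w i := hb i
      have : w i = w a := le_antisymm h1 (h ▸ h2)
      have hall : ∀ k, w k = w a := fun k => le_antisymm (ha k) (h ▸ hb k)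
      have : ∑ i, w i = (Fintype.card V : ℝ) * w a := by
        rw [Finset.sum_congr rfl fun k _ => hall k]
        simp [Finset.card_univ, mul_comm]
      rw [hwsum] at this
      have hwa : w a = 0 := by
        rcases mul_eq_zero.1 this.symm with h' | h'
        · exact absurd h' hn0.ne'
        · exact h'
      exact hi (by rw [hall i, hwa])
  have habne : a ≠ b := fun h => absurd (h ▸ hab) (lt_irrefl _)
  have hsqbound : ∀ i, w i * w i ≤ (w a - w b)^2 := by
    intro i
    nlinarith [ha i, hb i, hwa0, hwb0]
  have hS : ∑ i, w i * w i ≤ n * (w a - w b)^2 := by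
    calc ∑ i, w i * w i ≤ ∑ _i : V, (w a - w b)^2 :=
          Finset.sum_le_sum fun i _ => hsqbound i
      _ = n * (w a - w b)^2 := by
        rw [Finset.sum_const, Finset.card_univ, nsmul_eq_mul, hn]
  have hSpos : 0 < ∑ i, w i * w i := by
    obtain ⟨i, hi⟩ := hwne
    apply Finset.sum_pos' (fun k _ => mul_self_nonneg _)
    exact ⟨i, Finset.mem_univ i, mul_self_pos.2 hi⟩
  -- generalized Cauchy-Schwarz with M
  set x : V → ℝ := Pi.single a 1 - Pi.single b 1 with hxdef
  set z : V → ℝ := M⁻¹ *ᵥ x with hzdef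
  have hMz : M *ᵥ z = x := hMinv x
  have hgc := genCS hMpd hMsym w z
  have hwMw : w ⬝ᵥ (M *ᵥ w) = σ₂ * ∑ i, w i * w i := by
    rw [hquad w, hwsum, hLw, dotProduct_smul]
    simp [dotProduct, smul_eq_mul]
  have hwMz : w ⬝ᵥ (M *ᵥ z) = w a - w b := by
    rw [hMz, dotProduct_comm, hxdot a b w]
  have hzMz : z ⬝ᵥ (M *ᵥ z) = effRes G a b := by
    rw [hMz, dotProduct_comm, ← heff a b x rfl]
  rw [hwMw, hwMz, hzMz] at hgc
  set R := effRes G a b with hR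
  have hRle : R ≤ Rmax := hRmax.2 ⟨a, b, habne, rfl⟩
  constructor
  · -- 1/(n σ₂) ≤ Rmax
    have hkey : ∑ i, w i * w i ≤ n * σ₂ * (∑ i, w i * w i) * R := by
      calc ∑ i, w i * w i ≤ n * (w a - w b)^2 := hS
        _ ≤ n * (σ₂ * (∑ i, w i * w i) * R) := by
            apply mul_le_mul_of_nonneg_left _ hn0.le
            calc (w a - w b)^2 ≤ σ₂ * (∑ i, w i * w i) * R := hgc
              _ = σ₂ * (∑ i, w i * w i) * R := rfl
        _ = n * σ₂ * (∑ i, w i * w i) * R := by ring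
    have h1 : 1 ≤ n * σ₂ * R := by
      have h2 : (∑ i, w i * w i) * 1 ≤ (∑ i, w i * w i) * (n * σ₂ * R) := by
        rw [mul_one]
        calc ∑ i, w i * w i ≤ n * σ₂ * (∑ i, w i * w i) * R := hkey
          _ = (∑ i, w i * w i) * (n * σ₂ * R) := by ring
      exact le_of_mul_le_mul_left h2 hSpos
    have hnum : 1 / (n * σ₂) ≤ R := by
      rw [div_le_iff₀ (by positivity)]
      linarith [h1]
    linarith [hnum, hRle]
  · -- Rmax ≤ 2/σ₂
    obtain ⟨u, v, huv, hEq⟩ := hRmax.1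
    rw [hEq]
    exact upper u v huv
end
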